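/- Let d ≥ 1, γ ≥ 0, let S be an invertible d×d complex matrix, λ : Fin d → ℂ with Re(λ i) ≥ γ for all i, and A = S · diagonal(λ) · S⁻¹. Then for every real α ≥ 0, |trace(exp(−(α : ℂ) • A))| ≤ d · exp(−α·γ). -/

import Mathlib

open Matrix

/-- Exponential collapse bound: if `A = S · diagonal λ · S⁻¹` with
`Re (λ i) ≥ γ` for all `i`, then for every real `α ≥ 0`,
`|trace (exp (-α • A))| ≤ d · exp (-α·γ)`. -/
theorem abs_trace_exp_le (d : ℕ) (hd : 1 ≤ d) (γ : ℝ) (hγ : 0 ≤ γ)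
    (S : Matrix (Fin d) (Fin d) ℂ) (hS : IsUnit S)
    (l : Fin d → ℂ) (hl : ∀ i, γ ≤ (l i).re)
    (A : Matrix (Fin d) (Fin d) ℂ) (hA : A = S * Matrix.diagonal l * S⁻¹)
    (α : ℝ) (hα : 0 ≤ α) :
    ‖Matrix.trace (NormedSpace.exp (-(α : ℂ) • A))‖ ≤
      d * Real.exp (-(α * γ)) := by
  have h1 : -(α : ℂ) • A = S * Matrix.diagonal (fun i => -(α : ℂ) * l i) * S⁻¹ := by
    rw [hA, ← Matrix.smul_mul, ← Matrix.mul_smul, ← Matrix.diagonal_smul]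
    rfl
  rw [h1, Matrix.exp_conj _ _ hS, Matrix.exp_diagonal,
    Matrix.trace_mul_cycle, Matrix.nonsing_inv_mul _ ((Matrix.isUnit_iff_isUnit_det _).mp hS),
    Matrix.one_mul, Matrix.trace_diagonal]
  simp only [Pi.coe_exp]
  have hexp : ∀ i : Fin d, NormedSpace.exp (-(α : ℂ) * l i) = Complex.exp (-(α : ℂ) * l i) :=
    fun i => (Complex.exp_eq_exp_ℂ ▸ rfl)
  calc ‖∑ i, NormedSpace.exp ((fun i => -(α : ℂ) * l i) i)‖
      ≤ ∑ i, ‖NormedSpace.exp (-(α : ℂ) * l i)‖ :=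
        norm_sum_le _ _
    _ ≤ ∑ _i : Fin d, Real.exp (-(α * γ)) := by
        apply Finset.sum_le_sum
        intro i _
        rw [hexp i, Complex.norm_exp, Real.exp_le_exp]
        have : (-(α : ℂ) * l i).re = -α * (l i).re := by simp
        rw [this]
        nlinarith [hl i]
    _ = d * Real.exp (-(α * γ)) := by simp
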